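/- arXiv:2511.20984 — 2 statements merged into one kernel-verified Lean document; each statement's English description precedes it below -/
import Mathlib

section
/- Replacement Lemma with activeness: if G'₁ = H'₁ (equivalent), then the game {G'₁, G'₂, ..., G'ₙ}^g is equivalent to {H'₁, G'₂, ..., G'ₙ}^g (each G'ᵢ, H'₁ carrying its own activeness bit). -/
inductive AGame : Type where
  | mk : List AGame → Bool → AGame

namespace AGame

noncomputable instance : DecidableEq AGame := Classical.decEq _

def opts : AGame → List AGame | mk gs _ => gs
def act : AGame → Bool | mk _ g => g

theorem sizeOf_lt_of_mem {G G' : AGame} (h : G' ∈ G.opts) : sizeOf G' < sizeOf G := by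
  cases G with
  | mk gs g =>
    simp only [opts] at h
    have := List.sizeOf_lt_of_mem h
    simp [AGame.mk.sizeOf_spec]
    omega

/-- Disjunctive sum of games with activeness. -/
def add (G H : AGame) : AGame :=
  mk (G.opts.attach.map (fun x => add x.1 H) ++
      H.opts.attach.map (fun y => add G y.1)) (G.act || H.act)
termination_by sizeOf G + sizeOf H
decreasing_by
  · have := sizeOf_lt_of_mem x.2; omega
  · have := sizeOf_lt_of_mem y.2; omega

/-- `PPos G` means the outcome of `G` is 𝒫 (second player wins). -/
def PPos (G : AGame) : Prop :=
  G.act = false ∨ ∀ G' ∈ G.opts.attach, ¬ PPos G'.1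
termination_by sizeOf G
decreasing_by
  have := sizeOf_lt_of_mem G'.2; omega

/-- Hereditary set-equality (the paper's ≅). -/
def Identical (G H : AGame) : Prop :=
  G.act = H.act ∧ (∀ G' ∈ G.opts.attach, ∃ H' ∈ H.opts.attach, Identical G'.1 H'.1)
              ∧ (∀ H' ∈ H.opts.attach, ∃ G' ∈ G.opts.attach, Identical G'.1 H'.1)
termination_by sizeOf G + sizeOf H
decreasing_by
  · have := sizeOf_lt_of_mem G'.2; have := sizeOf_lt_of_mem H'.2; omega
  · have := sizeOf_lt_of_mem G'.2; have := sizeOf_lt_of_mem H'.2; omega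

/-- Equivalence of games with activeness: same outcome in every sum. -/
def Equiv (G H : AGame) : Prop := ∀ X : AGame, (PPos (add G X) ↔ PPos (add H X))

end AGame

namespace AGame

/-- Nimbers with activeness: `star γ n ≅ {star γ j : j < n}^{γ n}`. -/
def star (γ : ℕ → Bool) : ℕ → AGame
  | n => mk ((List.range n).attach.map (fun j => star γ j.1)) (γ n)
termination_by n => n
decreasing_by
  have := j.2; simp [List.mem_range] at this; omega

/-- The generalized Grundy set `𝒢^γ(G)`. -/
def GSet (γ : ℕ → Bool) (G : AGame) : Set ℕ := {n | PPos (add G (star γ n))}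

/-- Minimum excludant of a set of naturals. -/
noncomputable def mex (S : Set ℕ) : ℕ := sInf {n | n ∉ S}

/-- Ordinary Grundy value, computed ignoring activeness. -/
noncomputable def grundy (G : AGame) : ℕ :=
  mex {m | ∃ G' ∈ G.opts.attach, grundy G'.1 = m}
termination_by sizeOf G
decreasing_by
  have := sizeOf_lt_of_mem G'.2; omega

/-- The three types of games with activeness. -/
inductive AType : Type where
  | inactive : AType            -- type 0
  | activeSomeInactive : AType  -- type 1_{∃0}
  | activeAllActive : AType     -- type 1_{∀1}

open Classical in
/-- `type(G^g)`. -/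
noncomputable def typ (G : AGame) : AType :=
  if G.act = false then .inactive
  else if ∃ G' ∈ G.opts, G'.act = false then .activeSomeInactive
  else .activeAllActive

/-- Formal birthday `b(G)`. -/
def bday (G : AGame) : ℕ :=
  (G.opts.attach.map (fun G' => bday G'.1 + 1)).foldr max 0
termination_by sizeOf G
decreasing_by
  have := sizeOf_lt_of_mem G'.2; omega

/-- An option `G'` of `G` is reversible if it has an option equivalent to `G`. -/
def Reversible (G G' : AGame) : Prop := ∃ G'' ∈ G'.opts, Equiv G'' G

/-- A canonical game: all options canonical and no option reversible. -/
def Canonical (G : AGame) : Prop :=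
  (∀ G' ∈ G.opts.attach, Canonical G'.1) ∧ (∀ G' ∈ G.opts, ¬ Reversible G G')
termination_by sizeOf G
decreasing_by
  have := sizeOf_lt_of_mem G'.2; omega

/-- A transitive game: all options transitive and options of options are options. -/
def TransGame (G : AGame) : Prop :=
  (∀ G' ∈ G.opts.attach, TransGame G'.1) ∧ (∀ G' ∈ G.opts, ∀ G'' ∈ G'.opts, G'' ∈ G.opts)
termination_by sizeOf G
decreasing_by
  have := sizeOf_lt_of_mem G'.2; omega

/-- `G` is covered by `H` if every option of `G` is equivalent to some option of `H`. -/
def Covered (G H : AGame) : Prop := ∀ G' ∈ G.opts, ∃ H' ∈ H.opts, Equiv G' H'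

/-- The relation `G ⋈ H`. -/
def Bowtie (G H : AGame) : Prop :=
  (∀ G' ∈ G.opts, ¬ Equiv G' H) ∧ (∀ H' ∈ H.opts, ¬ Equiv G H')

/-- The linear chain `∅^{g₀ g₁ … gₙ}`. -/
def chain (g : ℕ → Bool) : ℕ → AGame
  | 0 => mk [] (g 0)
  | n + 1 => mk [chain g n] (g (n + 1))

end AGame

namespace AGame

theorem ppos_iff (G : AGame) :
    PPos G ↔ (G.act = false ∨ ∀ G' ∈ G.opts, ¬ PPos G') := by
  rw [PPos]
  constructor
  · rintro (h | h)
    · exact Or.inl h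
    · exact Or.inr fun G' hG' => h ⟨G', hG'⟩ (List.mem_attach _ _)
  · rintro (h | h)
    · exact Or.inl h
    · exact Or.inr fun G' _ => h G'.1 G'.2

theorem ppos_add_iff (G X : AGame) :
    PPos (add G X) ↔ ((G.act || X.act) = false ∨
      ((∀ G' ∈ G.opts, ¬ PPos (add G' X)) ∧ (∀ X' ∈ X.opts, ¬ PPos (add G X')))) := by
  rw [add, ppos_iff]
  simp only [opts, act, List.mem_append, List.mem_map]
  constructor
  · rintro (h | h)
    · exact Or.inl h
    · refine Or.inr ⟨fun G' hG' => h _ (Or.inl ⟨⟨G', hG'⟩, List.mem_attach _ _, rfl⟩),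
        fun X' hX' => h _ (Or.inr ⟨⟨X', hX'⟩, List.mem_attach _ _, rfl⟩)⟩
  · rintro (h | ⟨h1, h2⟩)
    · exact Or.inl h
    · refine Or.inr fun Y hY => ?_
      rcases hY with ⟨⟨G', hG'⟩, _, rfl⟩ | ⟨⟨X', hX'⟩, _, rfl⟩
      · exact h1 G' hG'
      · exact h2 X' hX'

theorem replacement_key (g : Bool) (G1 H1 : AGame) (rest : List AGame)
    (h : AGame.Equiv G1 H1) (X : AGame) :
    PPos (add (mk (G1 :: rest) g) X) ↔ PPos (add (mk (H1 :: rest) g) X) := by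
  rw [ppos_add_iff, ppos_add_iff]
  simp only [opts, act]
  have hG := h X
  constructor
  · rintro (hf | ⟨h1, hX⟩)
    · exact Or.inl hf
    · refine Or.inr ⟨fun G' hG' => ?_, fun X' hX' hp => hX X' hX' ?_⟩
      · rw [List.mem_cons] at hG'
        rcases hG' with rfl | hG'
        · exact fun hp => h1 G1 List.mem_cons_self (hG.mpr hp)
        · exact h1 G' (List.mem_cons_of_mem _ hG')
      · exact (replacement_key g G1 H1 rest h X').mpr hp
  · rintro (hf | ⟨h1, hX⟩)
    · exact Or.inl hf
    · refine Or.inr ⟨fun G' hG' => ?_, fun X' hX' hp => hX X' hX' ?_⟩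
      · rw [List.mem_cons] at hG'
        rcases hG' with rfl | hG'
        · exact fun hp => h1 H1 List.mem_cons_self (hG.mp hp)
        · exact h1 G' (List.mem_cons_of_mem _ hG')
      · exact (replacement_key g G1 H1 rest h X').mp hp
termination_by sizeOf X
decreasing_by
  · exact sizeOf_lt_of_mem hX'
  · exact sizeOf_lt_of_mem hX'

end AGame
/-- Replacement Lemma: replacing an option by an equivalent game yields an equivalent game. -/
theorem AGame.replacement (g : Bool) (G1 H1 : AGame) (rest : List AGame)
    (h : AGame.Equiv G1 H1) :
    AGame.Equiv (AGame.mk (G1 :: rest) g) (AGame.mk (H1 :: rest) g) := fun X => AGame.replacement_key g G1 H1 rest h X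
end

section
/- If G^g and H^h are non-equivalent impartial games with activeness, then there exists an active game X^1 such that o(G^g + X^1) = 𝒫 and o(H^h + X^1) = 𝒩. -/
namespace AGame

lemma opts_mk (l : List AGame) (b : Bool) : (mk l b).opts = l := rfl
lemma act_mk (l : List AGame) (b : Bool) : (mk l b).act = b := rfl

lemma PPos_iff (K : AGame) : PPos K ↔ (K.act = false ∨ ∀ Y ∈ K.opts, ¬ PPos Y) := by
  rw [PPos]
  constructor
  · rintro (h | h)
    · exact Or.inl h
    · exact Or.inr fun Y hY => h ⟨Y, hY⟩ (List.mem_attach _ _)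
  · rintro (h | h)
    · exact Or.inl h
    · exact Or.inr fun Y _ => h Y.1 Y.2

lemma not_PPos_iff (K : AGame) : ¬ PPos K ↔ (K.act = true ∧ ∃ Y ∈ K.opts, PPos Y) := by
  rw [PPos_iff]
  push_neg
  constructor
  · rintro ⟨h1, h2⟩
    refine ⟨by cases hb : K.act; exact absurd hb h1; rfl, h2⟩
  · rintro ⟨h1, h2⟩
    exact ⟨by simp [h1], h2⟩

lemma add_act (G H : AGame) : (add G H).act = (G.act || H.act) := by
  rw [add]; rfl

lemma mem_add_opts {G H Y : AGame} :
    Y ∈ (add G H).opts ↔ (∃ g ∈ G.opts, Y = add g H) ∨ (∃ x ∈ H.opts, Y = add G x) := by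
  rw [add]
  simp only [opts_mk, List.mem_append, List.mem_map, List.mem_attach, true_and,
    Subtype.exists]
  constructor
  · rintro (⟨a, ha, rfl⟩ | ⟨a, ha, rfl⟩)
    · exact Or.inl ⟨a, ha, rfl⟩
    · exact Or.inr ⟨a, ha, rfl⟩
  · rintro (⟨a, ha, rfl⟩ | ⟨a, ha, rfl⟩)
    · exact Or.inl ⟨a, ha, rfl⟩
    · exact Or.inr ⟨a, ha, rfl⟩

lemma add_mem_left {G H g : AGame} (h : g ∈ G.opts) : add g H ∈ (add G H).opts :=
  mem_add_opts.2 (Or.inl ⟨g, h, rfl⟩)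

lemma add_mem_right {G H x : AGame} (h : x ∈ H.opts) : add G x ∈ (add G H).opts :=
  mem_add_opts.2 (Or.inr ⟨x, h, rfl⟩)

/-- The Grundy value set of a game. -/
def Sset (G : AGame) : Set ℕ := {m | ∃ g ∈ G.opts, grundy g = m}

lemma grundy_eq (G : AGame) : grundy G = mex (Sset G) := by
  rw [grundy]
  congr 1
  ext m
  simp only [Sset, Set.mem_setOf_eq, List.mem_attach, true_and, Subtype.exists]
  constructor
  · rintro ⟨a, ha, rfl⟩; exact ⟨a, ha, rfl⟩
  · rintro ⟨a, ha, rfl⟩; exact ⟨a, ha, rfl⟩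

lemma Sset_finite (G : AGame) : (Sset G).Finite := by
  have h : Sset G = {m | m ∈ G.opts.map grundy} := by
    ext m
    simp [Sset, List.mem_map]
  rw [h]
  exact (G.opts.map grundy).finite_toSet

lemma compl_nonempty (G : AGame) : {n | n ∉ Sset G}.Nonempty := by
  have := (Sset_finite G).infinite_compl
  exact this.nonempty

lemma grundy_not_mem (G : AGame) : grundy G ∉ Sset G := by
  rw [grundy_eq, mex]
  exact Nat.sInf_mem (compl_nonempty G)

lemma grundy_ne_of_mem {G g : AGame} (h : g ∈ G.opts) : grundy g ≠ grundy G :=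
  fun he => grundy_not_mem G ⟨g, h, he⟩

lemma grundy_le {G : AGame} {n : ℕ} (h : ∀ g ∈ G.opts, grundy g ≠ n) : grundy G ≤ n := by
  rw [grundy_eq, mex]
  exact Nat.sInf_le (by rintro ⟨g, hg, he⟩; exact h g hg he)

lemma mem_of_lt_grundy {G : AGame} {j : ℕ} (h : j < grundy G) : ∃ g ∈ G.opts, grundy g = j := by
  rw [grundy_eq, mex] at h
  have := Nat.notMem_of_lt_sInf h
  simpa [Sset] using this

lemma star_act (γ : ℕ → Bool) (n : ℕ) : (star γ n).act = γ n := by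
  rw [star]; rfl

lemma mem_star_opts {γ : ℕ → Bool} {n : ℕ} {Y : AGame} :
    Y ∈ (star γ n).opts ↔ ∃ j < n, Y = star γ j := by
  rw [star]
  simp only [opts_mk, List.mem_map, List.mem_attach, true_and, Subtype.exists,
    List.mem_range]
  constructor
  · rintro ⟨a, ha, rfl⟩; exact ⟨a, ha, rfl⟩
  · rintro ⟨a, ha, rfl⟩; exact ⟨a, ha, rfl⟩

/-- Sprague–Grundy theory for all-active stars. -/
lemma star_grundy_aux : ∀ (N : ℕ) (G : AGame) (n : ℕ), sizeOf G + n ≤ N →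
    (PPos (add G (star (fun _ => true) n)) ↔ grundy G = n) := by
  intro N
  induction N using Nat.strong_induction_on with
  | _ N ih =>
    intro G n hN
    have hact : (add G (star (fun _ => true) n)).act = true := by
      rw [add_act, star_act, Bool.or_true]
    rw [PPos_iff]
    simp only [hact, Bool.true_eq_false, false_or]
    have hopts : (∀ Y ∈ (add G (star (fun _ => true) n)).opts, ¬ PPos Y) ↔
        ((∀ g ∈ G.opts, ¬ PPos (add g (star (fun _ => true) n))) ∧
         (∀ j < n, ¬ PPos (add G (star (fun _ => true) j)))) := by
      constructor
      · intro h
        constructor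
        · intro g hg
          exact h _ (add_mem_left hg)
        · intro j hj
          exact h _ (add_mem_right (mem_star_opts.2 ⟨j, hj, rfl⟩))
      · rintro ⟨h1, h2⟩ Y hY
        rcases mem_add_opts.1 hY with ⟨g, hg, rfl⟩ | ⟨x, hx, rfl⟩
        · exact h1 g hg
        · rcases mem_star_opts.1 hx with ⟨j, hj, rfl⟩
          exact h2 j hj
    rw [hopts]
    have ihg : ∀ g ∈ G.opts, (PPos (add g (star (fun _ => true) n)) ↔ grundy g = n) := by
      intro g hg
      have hs := sizeOf_lt_of_mem hg
      exact ih (sizeOf g + n) (by omega) g n le_rfl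
    have ihj : ∀ j < n, (PPos (add G (star (fun _ => true) j)) ↔ grundy G = j) := by
      intro j hj
      exact ih (sizeOf G + j) (by omega) G j le_rfl
    constructor
    · rintro ⟨h1, h2⟩
      have hle : grundy G ≤ n := grundy_le (fun g hg => by
        have := h1 g hg
        rw [ihg g hg] at this
        exact this)
      have hge : ¬ grundy G < n := fun hlt => by
        have := h2 (grundy G) hlt
        rw [ihj (grundy G) hlt] at this
        exact this rfl
      omega
    · rintro rfl
      constructor
      · intro g hg
        rw [ihg g hg]
        exact grundy_ne_of_mem hg
      · intro j hj
        rw [ihj j hj]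
        omega

lemma star_grundy (G : AGame) (n : ℕ) :
    PPos (add G (star (fun _ => true) n)) ↔ grundy G = n :=
  star_grundy_aux (sizeOf G + n) G n le_rfl

/-- Key construction: an (N,P)-distinguisher yields an active (P,N)-distinguisher. -/
lemma key (G H X₀ : AGame) (h1 : ¬ PPos (add G X₀)) (h2 : PPos (add H X₀)) :
    ∃ X : AGame, X.act = true ∧ PPos (add G X) ∧ ¬ PPos (add H X) := by
  classical
  refine ⟨mk (X₀ :: G.opts.map (fun g => star (fun _ => true) (grundy g))) true, rfl, ?_, ?_⟩
  · set X := mk (X₀ :: G.opts.map (fun g => star (fun _ => true) (grundy g))) true with hX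
    rw [PPos_iff]
    right
    intro Y hY
    rcases mem_add_opts.1 hY with ⟨g, hg, rfl⟩ | ⟨x, hx, rfl⟩
    · -- Y = g + X : show N by moving to g + star(grundy g)
      rw [not_PPos_iff]
      refine ⟨by rw [add_act, hX, act_mk, Bool.or_true], ?_⟩
      refine ⟨add g (star (fun _ => true) (grundy g)), ?_, ?_⟩
      · exact add_mem_right (by
          rw [hX, opts_mk]
          exact List.mem_cons_of_mem _ (List.mem_map.2 ⟨g, hg, rfl⟩))
      · exact (star_grundy g (grundy g)).2 rfl
    · -- Y = G + x with x an option of X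
      rw [hX, opts_mk] at hx
      rcases List.mem_cons.1 hx with hx | hx
      · exact hx ▸ h1
      · rcases List.mem_map.1 hx with ⟨g, hg, rfl⟩
        rw [star_grundy G (grundy g)]
        exact (grundy_ne_of_mem hg).symm
  · rw [not_PPos_iff]
    refine ⟨by rw [add_act, act_mk, Bool.or_true], ?_⟩
    exact ⟨add H X₀, add_mem_right (List.mem_cons_self), h2⟩

end AGame

/-- If `G ≠ H`, there is an active game `X^1` with `o(G+X^1)=𝒫` and `o(H+X^1)=𝒩`. -/
theorem AGame.exists_distinguisher (G H : AGame) (h : ¬ AGame.Equiv G H) :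
    ∃ X : AGame, X.act = true ∧ AGame.PPos (AGame.add G X) ∧ ¬ AGame.PPos (AGame.add H X) := by
  rw [AGame.Equiv] at h
  push_neg at h
  obtain ⟨X₀, hX₀⟩ := h
  rcases hX₀ with ⟨hG, hH⟩ | ⟨hG, hH⟩
  · obtain ⟨X', hact', hH', hG'⟩ := AGame.key H G X₀ hH hG
    exact AGame.key G H X' hG' hH'
  · exact AGame.key G H X₀ hG hH
end
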